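/- Let p be an odd prime and n a positive even integer. Write n = p^t · m with p ∤ m. Then for the power series f(X) = ((1+X)^n − 1)/(2+X) ∈ Z_p[[X]] (note 2+X is a unit in Z_p[[X]] since p is odd), the μ-invariant of f is 0 and the λ-invariant of f is p^t. -/

import Mathlib

/-- For `p` odd, `n = p^t m` positive even with `p ∤ m`, the power
series `f = ((1+X)^n − 1)/(2+X) ∈ ℤ_p[[X]]` has `μ(f) = 0` and `λ(f) = p^t`. -/
theorem stmt2 (p : ℕ) [Fact p.Prime] (hodd : Odd p)
    (n t m : ℕ) (hn : 0 < n) (hne : Even n) (hnm : n = p ^ t * m) (hm : ¬ p ∣ m)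
    (f : PowerSeries ℤ_[p])
    (hfdef : f * (2 + PowerSeries.X) = (1 + PowerSeries.X) ^ n - 1)
    (μ : ℕ) (P : Polynomial ℤ_[p]) (u : PowerSeries ℤ_[p])
    (hu : IsUnit u) (hPmon : P.Monic)
    (hPdist : ∀ i < P.natDegree, (p : ℤ_[p]) ∣ P.coeff i)
    (hdec : f = PowerSeries.C ((p : ℤ_[p]) ^ μ) * (P : PowerSeries ℤ_[p]) * u) :
    μ = 0 ∧ P.natDegree = p ^ t := by
  classical
  have hp := (Fact.out : p.Prime)
  have hp2 : p ≠ 2 := by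
    rintro rfl
    simp [Nat.odd_iff] at hodd
  let π : PowerSeries ℤ_[p] →+* PowerSeries (ZMod p) :=
    PowerSeries.map (PadicInt.toZMod : ℤ_[p] →+* ZMod p)
  haveI : CharP ((PowerSeries (ZMod p))) p :=
    charP_of_injective_ringHom PowerSeries.C_injective p
  -- the geometric-sum factor
  set S : PowerSeries (ZMod p) :=
    ∑ i ∈ Finset.range m, (1 + PowerSeries.X ^ p ^ t) ^ i with hSdef
  have hπg : π ((1 + PowerSeries.X) ^ n - 1) = S * PowerSeries.X ^ p ^ t := by
    have h1 : π ((1 + PowerSeries.X) ^ n - 1)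
        = (1 + PowerSeries.X : PowerSeries (ZMod p)) ^ n - 1 := by
      simp [π, PowerSeries.map_X]
    rw [h1, hnm, pow_mul, add_pow_char_pow, one_pow, ← geom_sum_mul, add_sub_cancel_left]
  -- order of S is 0
  have hm0 : (m : ZMod p) ≠ 0 := by
    rwa [Ne, ZMod.natCast_eq_zero_iff]
  have hS : S.order = 0 := by
    rw [show ((0 : ℕ∞)) = ((0 : ℕ) : ℕ∞) by simp, PowerSeries.order_eq_nat]
    constructor
    · rw [hSdef]
      simp only [PowerSeries.coeff_zero_eq_constantCoeff, map_sum, map_pow, map_add, map_one,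
        PowerSeries.constantCoeff_X]
      have hpt : p ^ t ≠ 0 := pow_ne_zero _ hp.ne_zero
      simp [zero_pow hpt, hm0]
    · intro i hi; omega
  -- order of 2 + X is 0
  have h2 : ((2 : PowerSeries (ZMod p)) + PowerSeries.X).order = 0 := by
    rw [show ((0 : ℕ∞)) = ((0 : ℕ) : ℕ∞) by simp, PowerSeries.order_eq_nat]
    constructor
    · have : ((2 : ℕ) : ZMod p) ≠ 0 := by
        rw [Ne, ZMod.natCast_eq_zero_iff]
        intro hd
        exact hp2 ((Nat.prime_dvd_prime_iff_eq hp Nat.prime_two).mp hd)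
      simpa [PowerSeries.constantCoeff_X, map_ofNat PowerSeries.constantCoeff 2] using this
    · intro i hi; omega
  -- apply π to the defining equation
  have key : π f * ((2 : PowerSeries (ZMod p)) + PowerSeries.X) = S * PowerSeries.X ^ p ^ t := by
    rw [← hπg, ← hfdef]
    simp [π, PowerSeries.map_X, map_ofNat]
  -- order of π f is p ^ t
  have horder : (π f).order = (p ^ t : ℕ) := by
    have h1 := congrArg PowerSeries.order key
    rw [PowerSeries.order_mul, PowerSeries.order_mul, hS, h2, PowerSeries.order_X_pow] at h1
    simpa using h1
  have hpmap : (PadicInt.toZMod : ℤ_[p] →+* ZMod p) ((p : ℤ_[p])) = 0 := by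
    rw [map_natCast, ZMod.natCast_self]
  -- μ = 0
  have hμ : μ = 0 := by
    by_contra hμ
    have : π f = 0 := by
      rw [hdec]
      simp [map_mul, PowerSeries.map_C, map_pow, hpmap, zero_pow hμ]
    rw [this, PowerSeries.order_zero] at horder
    exact (ENat.coe_ne_top _) horder.symm
  refine ⟨hμ, ?_⟩
  -- π P = X ^ natDegree
  have hPX : π (P : PowerSeries ℤ_[p]) = PowerSeries.X ^ P.natDegree := by
    ext k
    rw [PowerSeries.coeff_map, Polynomial.coeff_coe, PowerSeries.coeff_X_pow]
    rcases lt_trichotomy k P.natDegree with hk | hk | hk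
    · obtain ⟨c, hc⟩ := hPdist k hk
      rw [hc, map_mul, hpmap, zero_mul, if_neg hk.ne]
    · subst hk
      rw [hPmon.coeff_natDegree, map_one, if_pos rfl]
    · rw [Polynomial.coeff_eq_zero_of_natDegree_lt hk, map_zero, if_neg hk.ne']
  -- conclude
  have hπf : π f = PowerSeries.X ^ P.natDegree * π u := by
    rw [hdec, hμ]
    simp only [pow_zero, map_one, map_mul, PowerSeries.map_C, map_one, one_mul, hPX]
  have hufin : (π u).order = 0 := PowerSeries.order_zero_of_unit (hu.map π)
  rw [hπf, PowerSeries.order_mul, PowerSeries.order_X_pow, hufin, add_zero] at horder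
  exact_mod_cast horder
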